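/- With the coupled outcomes of the previous statement applied at test points x_{n₁+1},…,x_n with independent uniforms, the two-sided test statistic max over a finite set of detectors {h_j} of Σ_i (Y_i − q_{sign(h_j(x_i))}(x_i))·h_j(x_i) is almost surely at most max_j Σ_i (Y_i^{(sign(h_j(x_i)))} − q_{sign(h_j(x_i))}(x_i))·h_j(x_i); hence the bounding Monte Carlo statistic stochastically dominates the true two-sided test statistic under any null distribution with q₋ ≤ p₀ ≤ q₊ pointwise. -/

import Mathlib

open MeasureTheory Finset

/-- Coupling bound for the two-sided test statistic: with coupled outcomes built from shared
uniforms, the max over a finite family of detectors of the sign-adjusted empirical score with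
the true outcomes is a.s. at most the bounding Monte Carlo statistic; hence the latter
stochastically dominates the former under any null with `q₋ ≤ p₀ ≤ q₊` pointwise. -/
theorem two_sided_coupling_dominance {Ω 𝒳 : Type*} [MeasurableSpace Ω] (μ : Measure Ω)
    [IsProbabilityMeasure μ] (n m : ℕ) [NeZero m]
    (U : Fin n → Ω → ℝ) (hUmeas : ∀ i, Measurable (U i))
    (hUnif : ∀ i, ∀ t ∈ Set.Icc (0 : ℝ) 1, μ {ω | U i ω ≤ t} = ENNReal.ofReal t)
    (hIndep : ProbabilityTheory.iIndepFun U μ)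
    (p₀ qm qp : 𝒳 → ℝ)
    (hrange : ∀ z, 0 ≤ qm z ∧ qp z ≤ 1)
    (hnull : ∀ z, qm z ≤ p₀ z ∧ p₀ z ≤ qp z)
    (x : Fin n → 𝒳) (h : Fin m → 𝒳 → ℝ)
    (T Tstar : Ω → ℝ)
    (hT : ∀ ω, T ω = Finset.univ.sup' Finset.univ_nonempty (fun j : Fin m =>
        ∑ i, ((if U i ω ≤ p₀ (x i) then (1 : ℝ) else 0) -
            (if 0 < h j (x i) then qp (x i) else qm (x i))) * h j (x i)))
    (hTstar : ∀ ω, Tstar ω = Finset.univ.sup' Finset.univ_nonempty (fun j : Fin m =>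
        ∑ i, ((if 0 < h j (x i) then (if U i ω ≤ qp (x i) then (1 : ℝ) else 0)
              else (if U i ω ≤ qm (x i) then (1 : ℝ) else 0)) -
            (if 0 < h j (x i) then qp (x i) else qm (x i))) * h j (x i))) :
    (∀ᵐ ω ∂μ, T ω ≤ Tstar ω) ∧ ∀ t : ℝ, μ {ω | t < T ω} ≤ μ {ω | t < Tstar ω} := by
  have key : ∀ ω, T ω ≤ Tstar ω := by
    intro ω
    rw [hT, hTstar]
    apply Finset.sup'_mono_fun
    intro j _
    apply Finset.sum_le_sum
    intro i _
    by_cases hpos : 0 < h j (x i)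
    · simp only [if_pos hpos]
      apply mul_le_mul_of_nonneg_right _ hpos.le
      gcongr
      by_cases hU : U i ω ≤ p₀ (x i)
      · rw [if_pos hU, if_pos (hU.trans (hnull (x i)).2)]
      · rw [if_neg hU]; split <;> norm_num
    · simp only [if_neg hpos]
      push_neg at hpos
      apply mul_le_mul_of_nonpos_right _ hpos
      gcongr
      by_cases hU : U i ω ≤ qm (x i)
      · rw [if_pos hU, if_pos (hU.trans (hnull (x i)).1)]
      · rw [if_neg hU]; split <;> norm_num
  refine ⟨Filter.Eventually.of_forall key, fun t => measure_mono ?_⟩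
  exact fun ω hω => lt_of_lt_of_le hω (key ω)
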